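/- Consider the FGM construction: on a probability space, let I : Ω → {0,1}^d be a random vector and for j ∈ {1,2} let X^[j] = (X^[j]_1,...,X^[j]_d) be random vectors such that the 2d+1 random elements I, X^[1]_1,...,X^[1]_d, X^[2]_1,...,X^[2]_d are mutually independent, where for given cdfs F_1,...,F_d the rv X^[1]_k has cdf x ↦ 1−(1−F_k(x))^2 and X^[2]_k has cdf x ↦ F_k(x)^2; set X_k = (1−I_k)X^[1]_k + I_k X^[2]_k for k = 1,...,d. Then for all (x_1,...,x_d) ∈ ℝ^d, P(X_1 ≤ x_1, ..., X_d ≤ x_d) = Σ_{i∈{0,1}^d} P(I = i) ∏_{k=1}^d [(1−i_k)(1−(1−F_k(x_k))^2) + i_k F_k(x_k)^2]. In particular each X_k has marginal cdf F_k. -/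

import Mathlib

open MeasureTheory ProbabilityTheory

/-- Codomains of the `2d+1` random elements in the FGM construction: the symmetric
Bernoulli vector `I` (index `none`) and the `2d` order-statistic components (index
`some (k, j)`, where `j = 0` is the minimum and `j = 1` the maximum). -/
def fgmType (d : ℕ) : Option (Fin d × Fin 2) → Type
  | none => Fin d → Fin 2
  | some _ => ℝ

instance fgmTypeMeasurableSpace (d : ℕ) (o : Option (Fin d × Fin 2)) :
    MeasurableSpace (fgmType d o) := by
  cases o with
  | none => exact (inferInstance : MeasurableSpace (Fin d → Fin 2))
  | some p => exact (inferInstance : MeasurableSpace ℝ)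

/-- The family consisting of the Bernoulli random vector `I` together with the `2d`
order-statistic components `X j k`. -/
def fgmFamily {Ω : Type*} (d : ℕ) (I : Ω → Fin d → Fin 2)
    (X : Fin 2 → Fin d → Ω → ℝ) : (o : Option (Fin d × Fin 2)) → Ω → fgmType d o
  | none => I
  | some p => X p.2 p.1

lemma fgm_fin2_cases (b : Fin 2) : b = 0 ∨ b = 1 := by revert b; decide

lemma fgm_key {Ω : Type*} [MeasurableSpace Ω] (P : Measure Ω) (d : ℕ)
    (I : Ω → Fin d → Fin 2) (X : Fin 2 → Fin d → Ω → ℝ)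
    (hIndep : iIndepFun (fgmFamily d I X) P)
    (i : Fin d → Fin 2) (x : Fin d → ℝ) :
    P ((I ⁻¹' {i}) ∩ ⋂ k, X (i k) k ⁻¹' Set.Iic (x k))
      = P (I ⁻¹' {i}) * ∏ k, P (X (i k) k ⁻¹' Set.Iic (x k)) := by
  classical
  set S : Finset (Option (Fin d × Fin 2)) :=
    insert none ((Finset.univ : Finset (Fin d)).image fun k => some (k, i k)) with hS
  have hinj : Function.Injective (fun k : Fin d => (some (k, i k) : Option (Fin d × Fin 2))) := by
    intro a b h; simpa using congrArg (fun o => (o.getD (a, i a)).1) h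
  have hnone : (none : Option (Fin d × Fin 2)) ∉
      (Finset.univ : Finset (Fin d)).image fun k => some (k, i k) := by simp
  have key := hIndep.measure_inter_preimage_eq_mul S
    (sets := fun o => match o with
      | none => ({i} : Set (Fin d → Fin 2))
      | some p => (Set.Iic (x p.1) : Set ℝ))
    (fun o _ => by
      cases o with
      | none => exact measurableSet_singleton i
      | some p => exact (measurableSet_Iic : MeasurableSet (Set.Iic (x p.1))))
  rw [hS, Finset.set_biInter_insert, Finset.prod_insert hnone, Finset.prod_image
    (fun a _ b _ h => hinj h)] at key
  convert key using 2
  ext ω; simp [fgmFamily]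
  all_goals rfl

/-- Theorem 2.2: the joint cdf of the FGM construction
`X_k = (1 − I_k)·X^[1]_k + I_k·X^[2]_k`, and the fact that each `X_k` has marginal
cdf `F_k`. -/
theorem fgm_construction_joint_cdf {Ω : Type*} [MeasurableSpace Ω]
    (P : Measure Ω) [IsProbabilityMeasure P] (d : ℕ) (F : Fin d → ℝ → ℝ)
    (I : Ω → Fin d → Fin 2) (X : Fin 2 → Fin d → Ω → ℝ)
    (hI : Measurable I) (hX : ∀ j k, Measurable (X j k))
    (hIndep : iIndepFun (fgmFamily d I X) P)
    (hmarg : ∀ k : Fin d, P {ω | I ω k = 1} = 1 / 2)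
    (hcdf_min : ∀ k x, (P {ω | X 0 k ω ≤ x}).toReal = 1 - (1 - F k x) ^ 2)
    (hcdf_max : ∀ k x, (P {ω | X 1 k ω ≤ x}).toReal = (F k x) ^ 2) :
    (∀ x : Fin d → ℝ,
      (P {ω | ∀ k, (1 - ((I ω k : ℕ) : ℝ)) * X 0 k ω + ((I ω k : ℕ) : ℝ) * X 1 k ω
          ≤ x k}).toReal
        = ∑ i : Fin d → Fin 2, (P {ω | I ω = i}).toReal *
            ∏ k, ((1 - ((i k : ℕ) : ℝ)) * (1 - (1 - F k (x k)) ^ 2)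
              + ((i k : ℕ) : ℝ) * (F k (x k)) ^ 2))
    ∧ (∀ k : Fin d, ∀ x : ℝ,
        (P {ω | (1 - ((I ω k : ℕ) : ℝ)) * X 0 k ω + ((I ω k : ℕ) : ℝ) * X 1 k ω
            ≤ x}).toReal = F k x) := by
  classical
  constructor
  · intro x
    -- the decomposition of the event according to the value of I
    set A : (Fin d → Fin 2) → Set Ω :=
      fun i => (I ⁻¹' {i}) ∩ ⋂ k, X (i k) k ⁻¹' Set.Iic (x k) with hA
    have hset : {ω | ∀ k, (1 - ((I ω k : ℕ) : ℝ)) * X 0 k ω + ((I ω k : ℕ) : ℝ) * X 1 k ω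
        ≤ x k} = ⋃ i, A i := by
      ext ω
      simp only [Set.mem_setOf_eq, Set.mem_iUnion, hA, Set.mem_inter_iff, Set.mem_preimage,
        Set.mem_singleton_iff, Set.mem_iInter, Set.mem_Iic]
      constructor
      · intro h
        refine ⟨I ω, rfl, fun k => ?_⟩
        rcases fgm_fin2_cases (I ω k) with h0 | h1
        · have := h k; rw [h0] at this ⊢; simpa using this
        · have := h k; rw [h1] at this ⊢; simpa using this
      · rintro ⟨i, rfl, h⟩ k
        rcases fgm_fin2_cases (I ω k) with h0 | h1
        · have := h k; rw [h0] at this ⊢; simpa using this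
        · have := h k; rw [h1] at this ⊢; simpa using this
    have hAmeas : ∀ i, MeasurableSet (A i) := by
      intro i
      exact (hI (measurableSet_singleton i)).inter
        (MeasurableSet.iInter fun k => (hX (i k) k) measurableSet_Iic)
    have hdisj : Pairwise (Function.onFun Disjoint A) := by
      intro a b hab
      refine Set.disjoint_left.2 fun ω hωa hωb => hab ?_
      have h1 : I ω = a := hωa.1
      have h2 : I ω = b := hωb.1
      rw [← h1, ← h2]
    rw [hset, measure_iUnion hdisj hAmeas, tsum_fintype,
      ENNReal.toReal_sum (fun i _ => measure_ne_top P _)]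
    refine Finset.sum_congr rfl fun i _ => ?_
    rw [hA, fgm_key P d I X hIndep i x, ENNReal.toReal_mul, ENNReal.toReal_prod]
    have hI' : (I ⁻¹' {i}) = {ω | I ω = i} := rfl
    rw [hI']
    congr 1
    refine Finset.prod_congr rfl fun k _ => ?_
    rcases fgm_fin2_cases (i k) with h0 | h1
    · rw [h0]
      have h : X 0 k ⁻¹' Set.Iic (x k) = {ω | X 0 k ω ≤ x k} := rfl
      rw [h, hcdf_min k (x k)]
      norm_num
    · rw [h1]
      have h : X 1 k ⁻¹' Set.Iic (x k) = {ω | X 1 k ω ≤ x k} := rfl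
      rw [h, hcdf_max k (x k)]
      norm_num
  · intro k x
    have hindep : IndepFun I (X 0 k) P := by
      have := hIndep.indepFun (i := none) (j := some (k, 0)) (by simp)
      exact this
    have hindep1 : IndepFun I (X 1 k) P := by
      have := hIndep.indepFun (i := none) (j := some (k, 1)) (by simp)
      exact this
    have hmeas0 : MeasurableSet ({f : Fin d → Fin 2 | f k = 0}) :=
      (measurable_pi_apply k) (measurableSet_singleton 0)
    have hmeas1 : MeasurableSet ({f : Fin d → Fin 2 | f k = 1}) :=
      (measurable_pi_apply k) (measurableSet_singleton 1)
    have h0 := hindep.measure_inter_preimage_eq_mul {f | f k = 0} (Set.Iic x) hmeas0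
      measurableSet_Iic
    have h1 := hindep1.measure_inter_preimage_eq_mul {f | f k = 1} (Set.Iic x) hmeas1
      measurableSet_Iic
    -- probability that I k = 0
    have hcompl : (I ⁻¹' {f | f k = 0}) = (I ⁻¹' {f | f k = 1})ᶜ := by
      ext ω
      simp only [Set.mem_preimage, Set.mem_setOf_eq, Set.mem_compl_iff]
      rcases fgm_fin2_cases (I ω k) with h | h <;> simp [h]
    have hP1 : P (I ⁻¹' {f | f k = 1}) = 1 / 2 := hmarg k
    have hP0 : P (I ⁻¹' {f | f k = 0}) = 1 / 2 := by
      rw [hcompl, measure_compl (hI hmeas1) (measure_ne_top P _), measure_univ, hP1]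
      rw [ENNReal.sub_eq_of_eq_add (by norm_num)]
      rw [← ENNReal.add_halves 1]; norm_num
    have hsplit : {ω | (1 - ((I ω k : ℕ) : ℝ)) * X 0 k ω + ((I ω k : ℕ) : ℝ) * X 1 k ω ≤ x}
        = (I ⁻¹' {f | f k = 0} ∩ X 0 k ⁻¹' Set.Iic x)
          ∪ (I ⁻¹' {f | f k = 1} ∩ X 1 k ⁻¹' Set.Iic x) := by
      ext ω
      simp only [Set.mem_setOf_eq, Set.mem_union, Set.mem_inter_iff, Set.mem_preimage,
        Set.mem_Iic]
      rcases fgm_fin2_cases (I ω k) with h | h <;> rw [h] <;> simp [h] <;> rw [h]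
    have hdisj : Disjoint (I ⁻¹' {f | f k = 0} ∩ X 0 k ⁻¹' Set.Iic x)
        (I ⁻¹' {f | f k = 1} ∩ X 1 k ⁻¹' Set.Iic x) := by
      refine Set.disjoint_left.2 fun ω hωa hωb => ?_
      have ha : I ω k = 0 := hωa.1
      have hb : I ω k = 1 := hωb.1
      rw [ha] at hb
      exact absurd hb (by decide)
    rw [hsplit, measure_union hdisj ((hI hmeas1).inter ((hX 1 k) measurableSet_Iic)),
      h0, h1, hP0, hP1, ENNReal.toReal_add
        (by exact ENNReal.mul_ne_top (by norm_num) (measure_ne_top P _))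
        (by exact ENNReal.mul_ne_top (by norm_num) (measure_ne_top P _)),
      ENNReal.toReal_mul, ENNReal.toReal_mul]
    have e0 : (P (X 0 k ⁻¹' Set.Iic x)).toReal = 1 - (1 - F k x) ^ 2 := hcdf_min k x
    have e1 : (P (X 1 k ⁻¹' Set.Iic x)).toReal = (F k x) ^ 2 := hcdf_max k x
    rw [e0, e1]
    norm_num
    ring
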